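/- (Salié) Fix an odd prime p and an integer a not divisible by p. Then the Kloosterman sum satisfies K[1,a;p] = ∑_{x=0}^{p-1} χ(x² - 4a) e^{2πi x/p}, where x² - 4a is computed in ℤ/pℤ. -/

import Mathlib

open scoped BigOperators Classical

noncomputable section

/-- The Legendre symbol modulo `p`, viewed as a complex-valued function on `ZMod p`:
`1` on nonzero quadratic residues, `0` at `0`, `-1` on quadratic nonresidues. -/
def chi (p : ℕ) (k : ZMod p) : ℂ :=
  if k = 0 then 0 else if ∃ m : ZMod p, m ^ 2 = k then 1 else -1

/-- The Legendre symbol modulo `p`, viewed as an integer-valued function on `ZMod p`. -/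
def chiZ (p : ℕ) (k : ZMod p) : ℤ :=
  if k = 0 then 0 else if ∃ m : ZMod p, m ^ 2 = k then 1 else -1

/-- The discrete periodic (narrow band) ambiguity function
`A_p(u)[m,n] = (1/p) ∑_k u[k+m] conj(u[k]) e^{-2πi k n/p}`. -/
def ambig (p : ℕ) [NeZero p] (u : ZMod p → ℂ) (m n : ZMod p) : ℂ :=
  (1 / (p : ℂ)) * ∑ k : ZMod p,
    u (k + m) * (starRingEnd ℂ) (u k) *
      Complex.exp (-2 * Real.pi * Complex.I * (k.val : ℂ) * (n.val : ℂ) / (p : ℂ))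

/-- The Kloosterman sum `K[a,b;p] = ∑_{x ∈ (ℤ/pℤ)ˣ} e^{2πi(ax + b x⁻¹)/p}`. -/
def kloost (p : ℕ) [NeZero p] (a b : ℤ) : ℂ :=
  ∑ x : (ZMod p)ˣ,
    Complex.exp (2 * Real.pi * Complex.I *
      ((((a : ZMod p) * (x : ZMod p) + (b : ZMod p) * ((x⁻¹ : (ZMod p)ˣ) : ZMod p)).val : ℂ))
        / (p : ℂ))

/-- The Björck sequence of length `p` for a prime `p ≡ 1 (mod 4)`:
`u[k] = exp(iθχ(k))` with `θ = arccos (1/(1+√p))`. -/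
def bjorck1 (p : ℕ) (k : ZMod p) : ℂ :=
  Complex.exp (Complex.I * (Real.arccos (1 / (1 + Real.sqrt p)) : ℂ) * chi p k)

/-- The Björck sequence of length `p` for a prime `p ≡ 3 (mod 4)`:
`u[k] = exp(iφ)` with `φ = arccos ((1-p)/(1+p))` if `k` is a quadratic nonresidue,
and `u[k] = 1` otherwise. -/
def bjorck3 (p : ℕ) (k : ZMod p) : ℂ :=
  if ∀ m : ZMod p, m ^ 2 ≠ k then
    Complex.exp (Complex.I * (Real.arccos ((1 - (p : ℝ)) / (1 + (p : ℝ))) : ℂ))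
  else 1

end


section SalieAux

variable (p : ℕ) [hp : Fact p.Prime]

lemma chi_eq_quadChar (k : ZMod p) : chi p k = ((quadraticChar (ZMod p) k : ℤ) : ℂ) := by
  rw [chi, quadraticChar_apply, quadraticCharFun]
  by_cases h0 : k = 0
  · simp [h0]
  · have hiff : IsSquare k ↔ ∃ m : ZMod p, m ^ 2 = k := by
      constructor
      · rintro ⟨r, rfl⟩; exact ⟨r, sq r⟩
      · rintro ⟨m, rfl⟩; exact ⟨m, sq m⟩
    by_cases hsq : ∃ m : ZMod p, m ^ 2 = k <;> simp [h0, hiff, hsq]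

lemma salie_two_ne_zero (hp2 : p ≠ 2) : (2 : ZMod p) ≠ 0 := by
  have h : ((2 : ℕ) : ZMod p) ≠ 0 := by
    rw [Ne, ZMod.natCast_eq_zero_iff]
    intro h
    rcases (Nat.prime_dvd_prime_iff_eq hp.out Nat.prime_two).mp h with rfl
    exact hp2 rfl
  simpa using h

end SalieAux

theorem salie (p : ℕ) [hp : Fact p.Prime] (hp2 : p ≠ 2) (a : ℤ) (ha : ¬ (p : ℤ) ∣ a) :
    kloost p 1 a =
      ∑ x : ZMod p, chi p (x ^ 2 - 4 * (a : ZMod p)) *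
        Complex.exp (2 * Real.pi * Complex.I * (x.val : ℂ) / (p : ℂ)) := by
  classical
  have hp' : p.Prime := hp.out
  have hp1 : 1 < p := hp'.one_lt
  have hpz : p ≠ 0 := hp'.pos.ne'
  have h2z : (2 : ZMod p) ≠ 0 := salie_two_ne_zero p hp2
  have h4z : (4 : ZMod p) ≠ 0 := by
    have h4 : (4 : ZMod p) = 2 * 2 := by norm_num
    rw [h4]; exact mul_ne_zero h2z h2z
  have haz : (a : ZMod p) ≠ 0 := by
    rwa [Ne, ZMod.intCast_zmod_eq_zero_iff_dvd]
  set E : ZMod p → ℂ := fun t => Complex.exp (2 * Real.pi * Complex.I * (t.val : ℂ) / (p : ℂ))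
    with hE
  set f : (ZMod p)ˣ → ZMod p :=
    fun x => (x : ZMod p) + (a : ZMod p) * ((x⁻¹ : (ZMod p)ˣ) : ZMod p) with hf
  have h1 : kloost p 1 a = ∑ x : (ZMod p)ˣ, E (f x) := by
    simp only [kloost, hE, hf, Int.cast_one, one_mul]
  -- fiber cardinality
  have hcard : ∀ t : ZMod p,
      ((Finset.univ.filter fun x : (ZMod p)ˣ => f x = t).card : ℤ)
        = quadraticChar (ZMod p) (t ^ 2 - 4 * (a : ZMod p)) + 1 := by
    intro t
    have hchar : ringChar (ZMod p) ≠ 2 := (ZMod.ringChar_zmod_n p).substr hp2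
    rw [← quadraticChar_card_sqrts hchar (t ^ 2 - 4 * (a : ZMod p))]
    congr 1
    have hTmem : ∀ z : ZMod p,
        z ∈ {z : ZMod p | z ^ 2 = t ^ 2 - 4 * (a : ZMod p)}.toFinset →
          z ^ 2 = t ^ 2 - 4 * (a : ZMod p) := fun z hz => by
      simpa [Set.mem_toFinset] using hz
    have hnz : ∀ z ∈ {z : ZMod p | z ^ 2 = t ^ 2 - 4 * (a : ZMod p)}.toFinset,
        (t + z) / 2 ≠ 0 := by
      intro z hz h0
      have hz' := hTmem z hz
      have htz : t + z = 0 := by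
        field_simp at h0
        simpa using h0
      have hz2 : z = -t := by linear_combination htz
      rw [hz2] at hz'
      have h4a : (4 : ZMod p) * (a : ZMod p) = 0 := by linear_combination hz'
      rcases mul_eq_zero.mp h4a with h | h
      · exact h4z h
      · exact haz h
    refine Finset.card_bij' (fun x _ => 2 * (x : ZMod p) - t)
      (fun z hz => Units.mk0 ((t + z) / 2) (hnz z hz)) ?_ ?_ ?_ ?_
    · intro x hx
      have hfx : f x = t := (Finset.mem_filter.mp hx).2
      have hx1 : (x : ZMod p) * ((x⁻¹ : (ZMod p)ˣ) : ZMod p) = 1 := x.mul_inv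
      rw [hf] at hfx
      simp only [Set.mem_toFinset, Set.mem_setOf_eq]
      linear_combination (4 * (x : ZMod p)) * hfx - (4 * (a : ZMod p)) * hx1
    · intro z hz
      have hz' := hTmem z hz
      have hx0 : (t + z) / 2 ≠ 0 := hnz z hz
      have htz : t + z ≠ 0 := by
        intro h; exact hx0 (by rw [h, zero_div])
      simp only [Finset.mem_filter, Finset.mem_univ, true_and, hf,
        Units.val_inv_eq_inv_val, Units.val_mk0]
      field_simp
      linear_combination hz'
    · intro x hx
      have hfx : f x = t := (Finset.mem_filter.mp hx).2
      ext
      rw [Units.val_mk0]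
      field_simp
      ring
    · intro z hz
      simp only [Units.val_mk0]
      field_simp
      ring
  -- fiberwise summation
  have hsplit : ∑ x : (ZMod p)ˣ, E (f x)
      = ∑ t : ZMod p,
          ((Finset.univ.filter fun x : (ZMod p)ˣ => f x = t).card : ℂ) * E t := by
    rw [← Finset.sum_fiberwise_of_maps_to (g := f)
      (fun x _ => Finset.mem_univ (f x)) fun x => E (f x)]
    refine Finset.sum_congr rfl fun t _ => ?_
    rw [Finset.sum_congr rfl fun x hx => by rw [(Finset.mem_filter.mp hx).2],
      Finset.sum_const, nsmul_eq_mul]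
  -- sum of all p-th roots of unity is zero
  have hzero : ∑ t : ZMod p, E t = 0 := by
    have hprim := Complex.isPrimitiveRoot_exp p hpz
    have hgeom := hprim.geom_sum_eq_zero hp1
    rw [← hgeom]
    refine Finset.sum_nbij' (fun t : ZMod p => t.val) (fun i : ℕ => (i : ZMod p))
      (fun t _ => Finset.mem_range.mpr (ZMod.val_lt t)) (fun i _ => Finset.mem_univ _)
      (fun t _ => by simp [ZMod.natCast_val, ZMod.cast_id]) (fun i hi => by
        simpa using ZMod.val_natCast_of_lt (Finset.mem_range.mp hi)) ?_
    intro t _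
    simp only [hE]
    rw [← Complex.exp_nat_mul]
    congr 1
    field_simp
  -- put it together
  rw [h1, hsplit]
  have hterm : ∀ t : ZMod p,
      ((Finset.univ.filter fun x : (ZMod p)ˣ => f x = t).card : ℂ) * E t
        = chi p (t ^ 2 - 4 * (a : ZMod p)) * E t + E t := by
    intro t
    have hc : ((Finset.univ.filter fun x : (ZMod p)ˣ => f x = t).card : ℂ)
        = ((quadraticChar (ZMod p) (t ^ 2 - 4 * (a : ZMod p)) : ℤ) : ℂ) + 1 := by
      exact_mod_cast congrArg (fun n : ℤ => (n : ℂ)) (hcard t)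
    rw [hc, chi_eq_quadChar]
    ring
  rw [Finset.sum_congr rfl fun t _ => hterm t, Finset.sum_add_distrib, hzero, add_zero]
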